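/- Let p₂(x,y) and q₂(x,y) be binary quadratic forms over ℝ, K(x,y) = Jacobian(p₂, q₂) and μ = Discriminant(K). Then: deg gcd(p₂, q₂) = 0 iff μ ≠ 0; deg gcd(p₂, q₂) = 1 iff μ = 0 and K ≠ 0; deg gcd(p₂, q₂) = 2 iff K = 0 (provided (p₂, q₂) ≠ (0,0)). -/

import Mathlib

open MvPolynomial

lemma finsupp2_eq_iff (m n : Fin 2 →₀ ℕ) : m = n ↔ m 0 = n 0 ∧ m 1 = n 1 := by
  constructor
  · rintro rfl; exact ⟨rfl, rfl⟩
  · rintro ⟨h0, h1⟩; ext i; fin_cases i <;> assumption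

/-- binary quadratic form with coefficients a b c -/
noncomputable def quad {R : Type*} [CommSemiring R] (a b c : R) : MvPolynomial (Fin 2) R :=
  C a * X 0 ^ 2 + C b * (X 0 * X 1) + C c * X 1 ^ 2

lemma quad_coeff {R : Type*} [CommSemiring R] (a b c : R) :
    coeff (Finsupp.single 0 2) (quad a b c) = a
    ∧ coeff (Finsupp.single 0 1 + Finsupp.single 1 1) (quad a b c) = b
    ∧ coeff (Finsupp.single 1 2) (quad a b c) = c := by
  have hX01 : (X 0 * X 1 : MvPolynomial (Fin 2) R)
      = monomial (Finsupp.single 0 1 + Finsupp.single 1 1) 1 := by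
    rw [X, X, monomial_mul, mul_one]
  refine ⟨?_, ?_, ?_⟩ <;>
  · rw [quad, hX01, coeff_add, coeff_add, coeff_C_mul, coeff_C_mul, coeff_C_mul,
      X_pow_eq_monomial, X_pow_eq_monomial, coeff_monomial, coeff_monomial, coeff_monomial]
    simp only [finsupp2_eq_iff, Finsupp.add_apply, Finsupp.single_apply]
    norm_num

lemma quad_eq_quad_iff {R : Type*} [CommSemiring R] (a b c a' b' c' : R) :
    quad a b c = quad a' b' c' ↔ a = a' ∧ b = b' ∧ c = c' := by
  constructor
  · intro h
    refine ⟨?_, ?_, ?_⟩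
    · rw [← (quad_coeff a b c).1, ← (quad_coeff a' b' c').1, h]
    · rw [← (quad_coeff a b c).2.1, ← (quad_coeff a' b' c').2.1, h]
    · rw [← (quad_coeff a b c).2.2, ← (quad_coeff a' b' c').2.2, h]
  · rintro ⟨rfl, rfl, rfl⟩; rfl

lemma quad_eq_zero_iff {R : Type*} [CommSemiring R] (a b c : R) :
    quad a b c = 0 ↔ a = 0 ∧ b = 0 ∧ c = 0 := by
  have h0 : (0 : MvPolynomial (Fin 2) R) = quad 0 0 0 := by simp [quad]
  rw [h0, quad_eq_quad_iff]

lemma rep2 {R : Type*} [CommSemiring R] (p : MvPolynomial (Fin 2) R)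
    (hp : p.IsHomogeneous 2) :
    p = quad (coeff (Finsupp.single 0 2) p)
      (coeff (Finsupp.single 0 1 + Finsupp.single 1 1) p)
      (coeff (Finsupp.single 1 2) p) := by
  have hX01 : (X 0 * X 1 : MvPolynomial (Fin 2) R)
      = monomial (Finsupp.single 0 1 + Finsupp.single 1 1) 1 := by
    rw [X, X, monomial_mul, mul_one]
  have finsupp2_rep : ∀ m : Fin 2 →₀ ℕ,
      m = Finsupp.single 0 (m 0) + Finsupp.single 1 (m 1) := by
    intro m; rw [finsupp2_eq_iff]; constructor <;> simp
  have finsupp2_sum : ∀ m : Fin 2 →₀ ℕ, ∑ i ∈ m.support, m i = m 0 + m 1 := by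
    intro m
    rw [Finset.sum_subset (Finset.subset_univ m.support)
      (by intro x _ hx; simpa using hx)]
    exact Fin.sum_univ_two m
  ext m
  rw [quad, hX01]
  rw [coeff_add, coeff_add, coeff_C_mul, coeff_C_mul, coeff_C_mul, X_pow_eq_monomial,
    X_pow_eq_monomial, coeff_monomial, coeff_monomial, coeff_monomial]
  by_cases hdeg : m 0 + m 1 = 2
  · have hm := finsupp2_rep m
    have h0 : m 0 = 2 ∧ m 1 = 0 ∨ m 0 = 1 ∧ m 1 = 1 ∨ m 0 = 0 ∧ m 1 = 2 := by omega
    rcases h0 with ⟨h0, h1⟩ | ⟨h0, h1⟩ | ⟨h0, h1⟩ <;>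
      rw [h0, h1] at hm <;>
      simp only [finsupp2_eq_iff, Finsupp.add_apply, Finsupp.single_apply] <;>
      norm_num <;>
      · rw [hm]; congr 1 <;> simp [finsupp2_eq_iff]
  · have hz : coeff m p = 0 := by
      apply hp.coeff_eq_zero
      show m.degree ≠ 2
      have hd : m.degree = m 0 + m 1 := finsupp2_sum m
      omega
    rw [hz, if_neg, if_neg, if_neg]
    · simp
    all_goals
      simp only [finsupp2_eq_iff, Finsupp.add_apply, Finsupp.single_apply]
      norm_num
      omega

lemma map_quad (a b c : ℝ) :
    map (algebraMap ℝ ℂ) (quad a b c) = quad (a : ℂ) (b : ℂ) (c : ℂ) := by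
  simp [quad]

lemma jacobian_quad (a b c d e f : ℝ) :
    pderiv 0 (quad a b c) * pderiv 1 (quad d e f)
      - pderiv 1 (quad a b c) * pderiv 0 (quad d e f)
    = quad (2*(a*e - b*d)) (4*(a*f - c*d)) (2*(b*f - c*e)) := by
  have h0 : pderiv (0 : Fin 2) (X 1 : MvPolynomial (Fin 2) ℝ) = 0 := pderiv_X_of_ne (by decide)
  have h1 : pderiv (1 : Fin 2) (X 0 : MvPolynomial (Fin 2) ℝ) = 0 := pderiv_X_of_ne (by decide)
  simp only [quad, map_add, Derivation.leibniz, pderiv_C, pderiv_X_self, h0, h1,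
    smul_eq_mul, pderiv_pow, C_mul, C_sub, C_add, C_neg, map_ofNat]
  ring

lemma quad_factor (a b c u v g h : ℂ) (hA : a = u*g) (hB : b = u*h + v*g)
    (hC : c = v*h) : (C u * X 0 + C v * X 1) ∣ quad a b c := by
  refine ⟨C g * X 0 + C h * X 1, ?_⟩
  have hA' : (C a : MvPolynomial (Fin 2) ℂ) = C u * C g := by rw [hA, C_mul]
  have hB' : (C b : MvPolynomial (Fin 2) ℂ) = C u * C h + C v * C g := by
    rw [hB, C_add, C_mul, C_mul]
  have hC' : (C c : MvPolynomial (Fin 2) ℂ) = C v * C h := by rw [hC, C_mul]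
  rw [quad]
  linear_combination (X 0^2 : MvPolynomial (Fin 2) ℂ) * hA'
    + (X 0 * X 1 : MvPolynomial (Fin 2) ℂ) * hB'
    + (X 1^2 : MvPolynomial (Fin 2) ℂ) * hC'

lemma lin_dvd_quad_iff (a b c u v : ℂ) (huv : ¬(u = 0 ∧ v = 0)) :
    (C u * X 0 + C v * X 1) ∣ quad a b c ↔ a*v^2 - b*(u*v) + c*u^2 = 0 := by
  constructor
  · rintro ⟨M, hM⟩
    have h1 := congrArg (eval ![v, -u]) hM
    simp only [quad, eval_add, eval_mul, eval_pow, eval_C, eval_X,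
      Matrix.cons_val_zero, Matrix.cons_val_one, Matrix.head_cons] at h1
    linear_combination h1
  · intro h
    by_cases hv : v = 0
    · have hu : u ≠ 0 := fun h' => huv ⟨h', hv⟩
      have hc : c = 0 := by
        rw [hv] at h
        have h : c * u ^ 2 = 0 := by linear_combination h
        rcases mul_eq_zero.mp h with h' | h'
        · exact h'
        · exact absurd (pow_eq_zero_iff (by norm_num) |>.mp h') hu
      refine quad_factor a b c u v (a/u) (b/u) ?_ ?_ ?_
      · field_simp
      · rw [hv]; field_simp; ring
      · rw [hv, hc]; ring
    · refine quad_factor a b c u v ((b*v - u*c)/v^2) (c/v) ?_ ?_ ?_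
      · field_simp
        linear_combination h
      · field_simp
        ring
      · field_simp

lemma res_zero_of_root (A B C D E F s t : ℂ) (hst : ¬(s = 0 ∧ t = 0))
    (hP : A*s^2 + B*(s*t) + C*t^2 = 0) (hQ : D*s^2 + E*(s*t) + F*t^2 = 0) :
    (A*F - C*D)^2 - (A*E - B*D)*(B*F - C*E) = 0 := by
  by_cases ht : t = 0
  · have hs : s ≠ 0 := fun h' => hst ⟨h', ht⟩
    rw [ht] at hP hQ
    have hA : A = 0 := by
      have : A * s^2 = 0 := by linear_combination hP
      rcases mul_eq_zero.mp this with h' | h'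
      · exact h'
      · exact absurd (pow_eq_zero_iff (by norm_num) |>.mp h') hs
    have hD : D = 0 := by
      have : D * s^2 = 0 := by linear_combination hQ
      rcases mul_eq_zero.mp this with h' | h'
      · exact h'
      · exact absurd (pow_eq_zero_iff (by norm_num) |>.mp h') hs
    rw [hA, hD]; ring
  · have key : ((A*F - C*D)^2 - (A*E - B*D)*(B*F - C*E)) * t^4 = 0 := by
      linear_combination
        ((((A*E-B*D)*(s*t) + (A*F-C*D)*t^2) - 2*(A*E-B*D)*(s*t)) * A
            - (A*E-B*D)*t^2 * B) * hQ
        + ((A*E-B*D)*t^2*E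
            - (((A*E-B*D)*(s*t) + (A*F-C*D)*t^2) - 2*(A*E-B*D)*(s*t)) * D) * hP
    rcases mul_eq_zero.mp key with h' | h'
    · exact h'
    · exact absurd (pow_eq_zero_iff (by norm_num) |>.mp h') ht

lemma root_aux (A B C D E F : ℂ) (hA : A ≠ 0)
    (hR : (A*F - C*D)^2 - (A*E - B*D)*(B*F - C*E) = 0) :
    ∃ s t : ℂ, ¬(s = 0 ∧ t = 0) ∧ A*s^2 + B*(s*t) + C*t^2 = 0
      ∧ D*s^2 + E*(s*t) + F*t^2 = 0 := by
  obtain ⟨r, hr⟩ := IsAlgClosed.exists_pow_nat_eq (B^2 - 4*A*C) (n := 2) (by norm_num)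
  have ht2 : (2*A : ℂ) ≠ 0 := by
    simp [hA]
  have key : (D*(-B+r)^2 + E*((-B+r)*(2*A)) + F*(2*A)^2)
      * (D*(-B-r)^2 + E*((-B-r)*(2*A)) + F*(2*A)^2)
      = 16*A^2*((A*F - C*D)^2 - (A*E - B*D)*(B*F - C*E)) := by
    linear_combination (D*(2*(D*B^2 - 2*A*B*E + 4*A^2*F) + D*r^2 + D*(B^2-4*A*C))
      - (2*(A*E-B*D))^2) * hr
  rw [hR, mul_zero] at key
  rcases mul_eq_zero.mp key with h' | h'
  · exact ⟨-B+r, 2*A, fun hh => ht2 hh.2, by linear_combination A * hr, h'⟩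
  · exact ⟨-B-r, 2*A, fun hh => ht2 hh.2, by linear_combination A * hr, h'⟩

lemma root_iff_res (A B C D E F : ℂ) :
    (∃ s t : ℂ, ¬(s = 0 ∧ t = 0) ∧ A*s^2 + B*(s*t) + C*t^2 = 0
      ∧ D*s^2 + E*(s*t) + F*t^2 = 0)
    ↔ (A*F - C*D)^2 - (A*E - B*D)*(B*F - C*E) = 0 := by
  constructor
  · rintro ⟨s, t, hst, hP, hQ⟩
    exact res_zero_of_root A B C D E F s t hst hP hQ
  · intro hR
    by_cases hA : A = 0
    · by_cases hD : D = 0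
      · exact ⟨1, 0, by simp, by rw [hA]; ring, by rw [hD]; ring⟩
      · obtain ⟨s, t, hst, h1, h2⟩ := root_aux D E F A B C hD (by linear_combination hR)
        exact ⟨s, t, hst, h2, h1⟩
    · exact root_aux A B C D E F hA hR

/-- For real binary quadratic forms `p₂, q₂` (not both zero), with
`K = Jacobian(p₂, q₂)` and `μ = Discriminant(K)`: the degree of `gcd(p₂, q₂)` (over ℂ)
is `0` iff `μ ≠ 0`; `1` iff `μ = 0` and `K ≠ 0`; `2` iff `K = 0`. Here degree-2 gcd means
the forms are proportional, and degree ≥ 1 means a common linear factor over ℂ. -/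
theorem gcd_degree_quadratic_forms
    (p2 q2 : MvPolynomial (Fin 2) ℝ)
    (hp : p2.IsHomogeneous 2) (hq : q2.IsHomogeneous 2)
    (hne : ¬ (p2 = 0 ∧ q2 = 0)) :
    let K : MvPolynomial (Fin 2) ℝ :=
      pderiv 0 p2 * pderiv 1 q2 - pderiv 1 p2 * pderiv 0 q2
    let μ : ℝ :=
      (coeff (Finsupp.single (0 : Fin 2) 1 + Finsupp.single (1 : Fin 2) 1) K) ^ 2
        - 4 * coeff (Finsupp.single (0 : Fin 2) 2) K * coeff (Finsupp.single (1 : Fin 2) 2) K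
    let P : MvPolynomial (Fin 2) ℂ := map (algebraMap ℝ ℂ) p2
    let Q : MvPolynomial (Fin 2) ℂ := map (algebraMap ℝ ℂ) q2
    let CommonLin : Prop := ∃ u v : ℂ, (u, v) ≠ (0, 0) ∧
      (C u * X 0 + C v * X 1) ∣ P ∧ (C u * X 0 + C v * X 1) ∣ Q
    let Prop2 : Prop := ∃ c : ℂ, Q = C c * P ∨ P = C c * Q
    ((¬ CommonLin) ↔ μ ≠ 0) ∧
    ((CommonLin ∧ ¬ Prop2) ↔ (μ = 0 ∧ K ≠ 0)) ∧
    (Prop2 ↔ K = 0) := by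
  intro K μ P Q CommonLin Prop2
  obtain ⟨a, b, c, hp2⟩ : ∃ a b c, p2 = quad a b c := ⟨_, _, _, rep2 p2 hp⟩
  obtain ⟨d, e, f, hq2⟩ : ∃ d e f, q2 = quad d e f := ⟨_, _, _, rep2 q2 hq⟩
  subst hp2; subst hq2
  have hK : K = quad (2*(a*e - b*d)) (4*(a*f - c*d)) (2*(b*f - c*e)) :=
    jacobian_quad a b c d e f
  have hμ : μ = 16*((a*f - c*d)^2 - (a*e - b*d)*(b*f - c*e)) := by
    show (coeff (Finsupp.single (0 : Fin 2) 1 + Finsupp.single (1 : Fin 2) 1) K) ^ 2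
        - 4 * coeff (Finsupp.single (0 : Fin 2) 2) K * coeff (Finsupp.single (1 : Fin 2) 2) K
      = _
    rw [hK, (quad_coeff _ _ _).1, (quad_coeff _ _ _).2.1, (quad_coeff _ _ _).2.2]
    ring
  have hP : P = quad (a : ℂ) (b : ℂ) (c : ℂ) := map_quad a b c
  have hQ : Q = quad (d : ℂ) (e : ℂ) (f : ℂ) := map_quad d e f
  have hCL : CommonLin ↔ (∃ s t : ℂ, ¬(s = 0 ∧ t = 0)
      ∧ (a:ℂ)*s^2 + (b:ℂ)*(s*t) + (c:ℂ)*t^2 = 0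
      ∧ (d:ℂ)*s^2 + (e:ℂ)*(s*t) + (f:ℂ)*t^2 = 0) := by
    constructor
    · rintro ⟨u, v, huv, h1, h2⟩
      have huv' : ¬(u = 0 ∧ v = 0) := by simpa [Prod.ext_iff] using huv
      rw [hP, lin_dvd_quad_iff _ _ _ _ _ huv'] at h1
      rw [hQ, lin_dvd_quad_iff _ _ _ _ _ huv'] at h2
      refine ⟨v, -u, ?_, by linear_combination h1, by linear_combination h2⟩
      rintro ⟨hv, hu⟩
      exact huv' ⟨neg_eq_zero.mp hu, hv⟩
    · rintro ⟨s, t, hst, h1, h2⟩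
      have hst' : ¬(-t = 0 ∧ s = 0) := by
        rintro ⟨ht, hs⟩
        exact hst ⟨hs, neg_eq_zero.mp ht⟩
      refine ⟨-t, s, ?_, ?_, ?_⟩
      · simpa [Prod.ext_iff] using hst'
      · rw [hP, lin_dvd_quad_iff _ _ _ _ _ hst']
        linear_combination h1
      · rw [hQ, lin_dvd_quad_iff _ _ _ _ _ hst']
        linear_combination h2
  have hCLmu : CommonLin ↔ μ = 0 := by
    rw [hCL, root_iff_res, hμ]
    have hcast : ((a:ℂ)*f - c*d)^2 - ((a:ℂ)*e - b*d)*((b:ℂ)*f - c*e)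
        = (((a*f - c*d)^2 - (a*e - b*d)*(b*f - c*e) : ℝ) : ℂ) := by
      push_cast; ring
    rw [hcast, Complex.ofReal_eq_zero]
    constructor <;> intro h <;> linarith
  have hCmul : ∀ (γ x y z : ℂ), C γ * quad x y z = quad (γ*x) (γ*y) (γ*z) := by
    intro γ x y z
    rw [quad, quad, C_mul, C_mul, C_mul]
    ring
  have hP2K : Prop2 ↔ K = 0 := by
    rw [hK, quad_eq_zero_iff]
    constructor
    · rintro ⟨γ, h | h⟩
      · rw [hQ, hP, hCmul, quad_eq_quad_iff] at h
        obtain ⟨h1, h2, h3⟩ := h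
        refine ⟨?_, ?_, ?_⟩
        · have : ((2*(a*e - b*d) : ℝ) : ℂ) = 0 := by
            push_cast
            linear_combination 2*(a:ℂ)*h2 - 2*(b:ℂ)*h1
          exact_mod_cast this
        · have : ((4*(a*f - c*d) : ℝ) : ℂ) = 0 := by
            push_cast
            linear_combination 4*(a:ℂ)*h3 - 4*(c:ℂ)*h1
          exact_mod_cast this
        · have : ((2*(b*f - c*e) : ℝ) : ℂ) = 0 := by
            push_cast
            linear_combination 2*(b:ℂ)*h3 - 2*(c:ℂ)*h2
          exact_mod_cast this
      · rw [hQ, hP, hCmul, quad_eq_quad_iff] at h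
        obtain ⟨h1, h2, h3⟩ := h
        refine ⟨?_, ?_, ?_⟩
        · have : ((2*(a*e - b*d) : ℝ) : ℂ) = 0 := by
            push_cast
            linear_combination 2*(e:ℂ)*h1 - 2*(d:ℂ)*h2
          exact_mod_cast this
        · have : ((4*(a*f - c*d) : ℝ) : ℂ) = 0 := by
            push_cast
            linear_combination 4*(f:ℂ)*h1 - 4*(d:ℂ)*h3
          exact_mod_cast this
        · have : ((2*(b*f - c*e) : ℝ) : ℂ) = 0 := by
            push_cast
            linear_combination 2*(f:ℂ)*h2 - 2*(e:ℂ)*h3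
          exact_mod_cast this
    · rintro ⟨k1, k2, k3⟩
      have m1 : a*e - b*d = 0 := by linarith
      have m2 : a*f - c*d = 0 := by linarith
      have m3 : b*f - c*e = 0 := by linarith
      by_cases ha : a = 0
      · by_cases hb : b = 0
        · by_cases hc : c = 0
          · refine ⟨0, Or.inr ?_⟩
            rw [hP, hQ, hCmul, quad_eq_quad_iff, ha, hb, hc]
            norm_num
          · refine ⟨((f/c : ℝ) : ℂ), Or.inl ?_⟩
            rw [hQ, hP, hCmul, quad_eq_quad_iff]
            have e1 : d = (f/c) * a := by
              have hcd : c * d = 0 := by rw [ha] at m2; linarith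
              have hd0 : d = 0 := by
                rcases mul_eq_zero.mp hcd with h' | h'
                · exact absurd h' hc
                · exact h'
              rw [ha, hd0]; ring
            have e2 : e = (f/c) * b := by
              have hce : c * e = 0 := by rw [hb] at m3; linarith
              have he0 : e = 0 := by
                rcases mul_eq_zero.mp hce with h' | h'
                · exact absurd h' hc
                · exact h'
              rw [hb, he0]; ring
            have e3 : f = (f/c) * c := by field_simp
            exact ⟨by exact_mod_cast congrArg (Complex.ofReal) e1,
              by exact_mod_cast congrArg (Complex.ofReal) e2,
              by exact_mod_cast congrArg (Complex.ofReal) e3⟩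
        · refine ⟨((e/b : ℝ) : ℂ), Or.inl ?_⟩
          rw [hQ, hP, hCmul, quad_eq_quad_iff]
          have e1 : d = (e/b) * a := by field_simp; linarith
          have e2 : e = (e/b) * b := by field_simp
          have e3 : f = (e/b) * c := by field_simp; linarith
          exact ⟨by exact_mod_cast congrArg (Complex.ofReal) e1,
            by exact_mod_cast congrArg (Complex.ofReal) e2,
            by exact_mod_cast congrArg (Complex.ofReal) e3⟩
      · refine ⟨((d/a : ℝ) : ℂ), Or.inl ?_⟩
        rw [hQ, hP, hCmul, quad_eq_quad_iff]
        have e1 : d = (d/a) * a := by field_simp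
        have e2 : e = (d/a) * b := by field_simp; linarith
        have e3 : f = (d/a) * c := by field_simp; linarith
        exact ⟨by exact_mod_cast congrArg (Complex.ofReal) e1,
          by exact_mod_cast congrArg (Complex.ofReal) e2,
          by exact_mod_cast congrArg (Complex.ofReal) e3⟩
  refine ⟨not_congr hCLmu, ?_, hP2K⟩
  constructor
  · rintro ⟨hcl, hnp2⟩
    exact ⟨hCLmu.mp hcl, fun hK0 => hnp2 (hP2K.mpr hK0)⟩
  · rintro ⟨hμ0, hK0⟩
    exact ⟨hCLmu.mpr hμ0, fun hp2' => hK0 (hP2K.mp hp2')⟩
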